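/- arXiv:2212.06945 — 2 statements merged into one kernel-verified Lean document; each statement's English description precedes it below -/
import Mathlib

section
/- Let X be a Banach space, φ: X → (−∞,∞] lower semicontinuous, U × V a convex neighborhood of (x̄, x̄*) with x̄* ∈ ∂φ(x̄), ε > 0, and assume the subgradient-inequality condition: every (u,u*) ∈ (U_ε × V) ∩ gph ∂φ satisfies φ(x) ≥ φ(u) + ⟨u*, x − u⟩ for all x ∈ U. Define φ̂(x) := sup{ φ(u) + ⟨u*, x − u⟩ : (u,u*) ∈ (U_ε × V) ∩ gph ∂φ } for x ∈ X. Then φ̂ is convex, lower semicontinuous, satisfies φ̂ ≤ φ on U, and, provided U ⊂ B_{r₁}(x̄) and V ⊂ B_{r₂}(x̄*) with r₁(‖x̄*‖ + r₂) < ε, one has the equivalence: (x, x*) ∈ (U_ε × V) ∩ gph ∂φ if and only if (x, x*) ∈ (U × V) ∩ gph ∂φ̂ and φ̂(x) = φ(x). -/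
open Filter Topology

variable {X : Type*} [NormedAddCommGroup X] [NormedSpace ℝ X]

/-- The Fréchet `ε`-subdifferential of `φ` at `x`. -/
def EpsSubdiff (φ : X → EReal) (ε : ℝ) (x : X) : Set (X →L[ℝ] ℝ) :=
  {xs | ∀ η : ℝ, 0 < η → ∃ δ : ℝ, 0 < δ ∧ ∀ y : X, ‖y - x‖ < δ →
    φ x + ((xs (y - x) - (ε + η) * ‖y - x‖ : ℝ) : EReal) ≤ φ y}

/-- The limiting (Mordukhovich) subdifferential of `φ` at `xbar`:
sequential outer limit (with weak* convergence of subgradients) of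
`ε`-subdifferentials along `φ`-attentive convergence. -/
def LimitingSubdiff (φ : X → EReal) (xbar : X) : Set (X →L[ℝ] ℝ) :=
  {xs | ∃ (xk : ℕ → X) (xsk : ℕ → X →L[ℝ] ℝ) (εk : ℕ → ℝ),
    (∀ k, 0 ≤ εk k) ∧ Tendsto εk atTop (𝓝 0) ∧
    Tendsto xk atTop (𝓝 xbar) ∧
    Tendsto (fun k => φ (xk k)) atTop (𝓝 (φ xbar)) ∧
    (∀ k, xsk k ∈ EpsSubdiff φ (εk k) (xk k)) ∧
    (∀ v : X, Tendsto (fun k => xsk k v) atTop (𝓝 (xs v)))}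

/-- The convex-analysis subdifferential of an extended-real-valued function. -/
def ConvexSubdiff (ψ : X → EReal) (x : X) : Set (X →L[ℝ] ℝ) :=
  {xs | ∀ y : X, ψ x + ((xs (y - x) : ℝ) : EReal) ≤ ψ y}

/-- Convexity of an `EReal`-valued function on a set. -/
def ERealConvexOn (s : Set X) (ψ : X → EReal) : Prop :=
  ∀ x ∈ s, ∀ y ∈ s, ∀ t : ℝ, 0 ≤ t → t ≤ 1 →
    ψ (t • x + (1 - t) • y) ≤ (t : EReal) * ψ x + ((1 - t : ℝ) : EReal) * ψ y

/-- Rockafellar's variational convexity of `φ` at `xbar` for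
`xs ∈ ∂φ(xbar)`. -/
def VariationallyConvexAt (φ : X → EReal) (xbar : X) (xs : X →L[ℝ] ℝ) : Prop :=
  ∃ (U : Set X) (V : Set (X →L[ℝ] ℝ)),
    IsOpen U ∧ Convex ℝ U ∧ xbar ∈ U ∧ IsOpen V ∧ Convex ℝ V ∧ xs ∈ V ∧
    ∃ (φhat : X → EReal) (ε : ℝ), 0 < ε ∧
      ERealConvexOn Set.univ φhat ∧ LowerSemicontinuous φhat ∧
      (∀ x ∈ U, φhat x ≤ φ x) ∧
      (∀ (x : X) (v : X →L[ℝ] ℝ),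
        (x ∈ U ∧ φ x < φ xbar + (ε : EReal) ∧ v ∈ V ∧
            v ∈ LimitingSubdiff φ x) ↔
        (x ∈ U ∧ v ∈ V ∧ v ∈ ConvexSubdiff φhat x)) ∧
      (∀ (x : X) (v : X →L[ℝ] ℝ),
        x ∈ U ∧ v ∈ V ∧ v ∈ ConvexSubdiff φhat x → φ x = φhat x)

/-- properties of the convexification
`φ̂(x) = sup { φ(u) + ⟨u*, x − u⟩ : (u,u*) ∈ (U_ε × V) ∩ gph ∂φ }`. -/
theorem convexification_properties
    [CompleteSpace X] (φ : X → EReal) (hlsc : LowerSemicontinuous φ)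
    (hnb : ∀ x, φ x ≠ ⊥) (xbar : X) (hdom : φ xbar ≠ ⊤)
    (xsbar : X →L[ℝ] ℝ) (hsub : xsbar ∈ LimitingSubdiff φ xbar)
    (U : Set X) (V : Set (X →L[ℝ] ℝ)) (ε r₁ r₂ : ℝ)
    (hU : IsOpen U) (hUc : Convex ℝ U) (hxU : xbar ∈ U)
    (hV : IsOpen V) (hVc : Convex ℝ V) (hxV : xsbar ∈ V) (hε : 0 < ε)
    (hineq : ∀ (u : X) (us : X →L[ℝ] ℝ),
      u ∈ U → φ u < φ xbar + (ε : EReal) → us ∈ V →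
      us ∈ LimitingSubdiff φ u →
      ∀ x ∈ U, φ u + ((us (x - u) : ℝ) : EReal) ≤ φ x)
    (hUr : U ⊆ Metric.ball xbar r₁) (hVr : V ⊆ Metric.ball xsbar r₂)
    (hrε : r₁ * (‖xsbar‖ + r₂) < ε)
    (φhat : X → EReal)
    (hφhat : φhat = fun x =>
      ⨆ (u : X) (us : X →L[ℝ] ℝ)
        (_ : u ∈ U ∧ φ u < φ xbar + (ε : EReal) ∧ us ∈ V ∧
          us ∈ LimitingSubdiff φ u),
        φ u + ((us (x - u) : ℝ) : EReal)) :
    ERealConvexOn Set.univ φhat ∧ LowerSemicontinuous φhat ∧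
    (∀ x ∈ U, φhat x ≤ φ x) ∧
    (∀ (x : X) (xs : X →L[ℝ] ℝ),
      (x ∈ U ∧ φ x < φ xbar + (ε : EReal) ∧ xs ∈ V ∧
        xs ∈ LimitingSubdiff φ x) ↔
      (x ∈ U ∧ xs ∈ V ∧ xs ∈ ConvexSubdiff φhat x ∧ φhat x = φ x)) := by
  -- φ xbar is a real number
  obtain ⟨a, ha⟩ : ∃ a : ℝ, φ xbar = (a : EReal) :=
    ⟨(φ xbar).toReal, (EReal.coe_toReal hdom (hnb xbar)).symm⟩
  have hεtop : φ xbar + (ε : EReal) = ((a + ε : ℝ) : EReal) := by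
    rw [ha, EReal.coe_add]
  have hreal : ∀ u : X, φ u < φ xbar + (ε : EReal) → ∃ b : ℝ, φ u = (b : EReal) := by
    intro u hu
    refine ⟨(φ u).toReal, (EReal.coe_toReal ?_ (hnb u)).symm⟩
    rw [hεtop] at hu
    exact ne_top_of_lt hu
  -- φhat ≤ φ on U
  have hle : ∀ x ∈ U, φhat x ≤ φ x := by
    intro x hx
    rw [hφhat]
    exact iSup_le fun u => iSup_le fun us => iSup_le fun hQ =>
      hineq u us hQ.1 hQ.2.1 hQ.2.2.1 hQ.2.2.2 x hx
  -- each generating affine function lies below φhat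
  have hterm : ∀ (u : X) (us : X →L[ℝ] ℝ),
      (u ∈ U ∧ φ u < φ xbar + (ε : EReal) ∧ us ∈ V ∧ us ∈ LimitingSubdiff φ u) →
      ∀ y : X, φ u + ((us (y - u) : ℝ) : EReal) ≤ φhat y := by
    intro u us hQ y
    rw [hφhat]
    exact le_iSup_of_le u (le_iSup_of_le us (le_iSup_of_le hQ le_rfl))
  -- convexity
  have hconv : ERealConvexOn Set.univ φhat := by
    intro x _ y _ t ht0 ht1
    refine le_trans (le_of_eq (congrFun hφhat _)) ?_
    refine iSup_le fun u => iSup_le fun us => iSup_le fun hQ => ?_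
    obtain ⟨b, hb⟩ := hreal u hQ.2.1
    have hz : t • x + (1 - t) • y - u = t • (x - u) + (1 - t) • (y - u) := by module
    calc φ u + ((us (t • x + (1 - t) • y - u) : ℝ) : EReal)
        = ((t * (b + us (x - u)) + (1 - t) * (b + us (y - u)) : ℝ) : EReal) := by
          have husz : us (t • x + (1 - t) • y - u) = t * us (x - u) + (1 - t) * us (y - u) := by
            rw [hz, map_add, map_smul, map_smul]; simp [smul_eq_mul]
          rw [hb, husz, ← EReal.coe_add]
          exact congrArg _ (by ring)
      _ = (t : EReal) * ((b + us (x - u) : ℝ) : EReal)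
            + ((1 - t : ℝ) : EReal) * ((b + us (y - u) : ℝ) : EReal) := by
          rw [EReal.coe_add, EReal.coe_mul, EReal.coe_mul]
      _ ≤ (t : EReal) * φhat x + ((1 - t : ℝ) : EReal) * φhat y := by
          have hx' : ((b + us (x - u) : ℝ) : EReal) ≤ φhat x := by
            have h := hterm u us hQ x
            rwa [hb, ← EReal.coe_add] at h
          have hy' : ((b + us (y - u) : ℝ) : EReal) ≤ φhat y := by
            have h := hterm u us hQ y
            rwa [hb, ← EReal.coe_add] at h
          exact add_le_add (mul_le_mul_of_nonneg_left hx' (by exact_mod_cast ht0))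
            (mul_le_mul_of_nonneg_left hy' (by exact_mod_cast (by linarith : (0:ℝ) ≤ 1 - t)))
  -- lower semicontinuity
  have hlsc' : LowerSemicontinuous φhat := by
    rw [hφhat]
    refine lowerSemicontinuous_iSup fun u => lowerSemicontinuous_iSup fun us =>
      lowerSemicontinuous_iSup fun hQ => ?_
    obtain ⟨b, hb⟩ := hreal u hQ.2.1
    have heq : (fun x => φ u + ((us (x - u) : ℝ) : EReal))
        = fun x => (((b + us (x - u)) : ℝ) : EReal) := by
      funext x; rw [hb, EReal.coe_add]
    rw [heq]
    exact (continuous_coe_real_ereal.comp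
      (continuous_const.add (us.continuous.comp (continuous_id.sub continuous_const)))).lowerSemicontinuous
  refine ⟨hconv, hlsc', hle, ?_⟩
  intro x xs
  constructor
  · rintro ⟨hxU', hxε, hxsV, hxsL⟩
    have hQx : x ∈ U ∧ φ x < φ xbar + (ε : EReal) ∧ xs ∈ V ∧ xs ∈ LimitingSubdiff φ x :=
      ⟨hxU', hxε, hxsV, hxsL⟩
    have heq : φhat x = φ x := by
      refine le_antisymm (hle x hxU') ?_
      have h := hterm x xs hQx x
      simpa using h
    refine ⟨hxU', hxsV, ?_, heq⟩
    intro y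
    rw [heq]
    exact hterm x xs hQx y
  · rintro ⟨hxU', hxsV, hcs, heq⟩
    -- quantitative bounds
    have hx1 : ‖x - xbar‖ < r₁ := by
      have h := hUr hxU'; rwa [Metric.mem_ball, dist_eq_norm] at h
    have hx2 : ‖xs - xsbar‖ < r₂ := by
      have h := hVr hxsV; rwa [Metric.mem_ball, dist_eq_norm] at h
    have hr2 : 0 < r₂ := by
      have h := hVr hxV; rwa [Metric.mem_ball, dist_self] at h
    have hxs_norm : ‖xs‖ < ‖xsbar‖ + r₂ := by
      have h := norm_sub_norm_le xs xsbar
      linarith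
    have hc : |xs (xbar - x)| < ε := by
      have h1 : |xs (xbar - x)| ≤ ‖xs‖ * ‖xbar - x‖ := xs.le_opNorm (xbar - x)
      have h2 : ‖xbar - x‖ < r₁ := by rwa [norm_sub_rev]
      nlinarith [norm_nonneg xs, norm_nonneg (xbar - x), norm_nonneg xsbar]
    have hkey : φ x + ((xs (xbar - x) : ℝ) : EReal) ≤ (a : EReal) := by
      have h := hcs xbar
      rw [heq] at h
      exact h.trans ((hle xbar hxU).trans_eq ha)
    obtain ⟨b, hb⟩ : ∃ b : ℝ, φ x = (b : EReal) := by
      refine ⟨(φ x).toReal, (EReal.coe_toReal ?_ (hnb x)).symm⟩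
      intro htop
      rw [htop, EReal.top_add_coe] at hkey
      exact EReal.coe_ne_top a (top_le_iff.mp hkey)
    rw [hb, ← EReal.coe_add] at hkey
    have hba : b + xs (xbar - x) ≤ a := by exact_mod_cast hkey
    have hfε : φ x < φ xbar + (ε : EReal) := by
      rw [hb, hεtop, EReal.coe_lt_coe_iff]
      have habs := abs_lt.mp hc
      linarith [habs.1]
    have hloc : ∀ y ∈ U, φ x + ((xs (y - x) : ℝ) : EReal) ≤ φ y := by
      intro y hy
      have h := hcs y
      rw [heq] at h
      exact h.trans (hle y hy)
    have hLim : xs ∈ LimitingSubdiff φ x := by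
      have heps : xs ∈ EpsSubdiff φ 0 x := ?_
      · exact ⟨fun _ => x, fun _ => xs, fun _ => 0, fun _ => le_rfl, tendsto_const_nhds,
          tendsto_const_nhds, tendsto_const_nhds, fun _ => heps, fun v => tendsto_const_nhds⟩
      intro η hη
      obtain ⟨δ, hδ, hball⟩ := Metric.isOpen_iff.mp hU x hxU'
      refine ⟨δ, hδ, fun y hy => ?_⟩
      have hyU : y ∈ U := hball (by rwa [Metric.mem_ball, dist_eq_norm])
      refine le_trans ?_ (hloc y hyU)
      apply add_le_add le_rfl
      apply EReal.coe_le_coe_iff.mpr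
      have hn : (0:ℝ) ≤ (0 + η) * ‖y - x‖ :=
        mul_nonneg (by linarith) (norm_nonneg _)
      linarith
    exact ⟨hxU', hfε, hxsV, hLim⟩
end

section
/- Let X be a Banach space and φ: X → (−∞,∞] lower semicontinuous. If φ is variationally convex at x̄ for x̄* ∈ ∂φ(x̄), then ∂φ is φ-locally maximal monotone around (x̄, x̄*): there exist a neighborhood U × V of (x̄, x̄*), ε > 0, and a maximal monotone operator T̄: X ⇉ X* such that gph T̄ ∩ (U_ε × V) = gph ∂φ ∩ (U_ε × V), where U_ε = { x ∈ U : φ(x) < φ(x̄) + ε }. -/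
open Filter Topology

variable {X : Type*} [NormedAddCommGroup X] [NormedSpace ℝ X]

/-- Monotonicity of a set-valued operator `T : X ⇉ X*`. -/
def MonotoneOperator (T : X → Set (X →L[ℝ] ℝ)) : Prop :=
  ∀ x₁ x₂ : X, ∀ xs₁ ∈ T x₁, ∀ xs₂ ∈ T x₂, 0 ≤ (xs₁ - xs₂) (x₁ - x₂)

/-- Maximal monotonicity of a set-valued operator `T : X ⇉ X*`. -/
def MaximalMonotoneOperator (T : X → Set (X →L[ℝ] ℝ)) : Prop :=
  MonotoneOperator T ∧
    ∀ S : X → Set (X →L[ℝ] ℝ), MonotoneOperator S →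
      (∀ x, T x ⊆ S x) → ∀ x, S x = T x

section Aux
open Set

lemma ekelandWeak {Y : Type*} [MetricSpace Y] [CompleteSpace Y]
    (G : Y → ℝ) (hG : LowerSemicontinuous G) (c : ℝ) (hb : ∀ x, c ≤ G x)
    {ε : ℝ} (hε : 0 < ε) (x₀ : Y) :
    ∃ u, G u ≤ G x₀ ∧ ∀ x, G u - ε * dist x u ≤ G x := by
  classical
  set S : Y → Set Y := fun x => {y | G y + ε * dist y x ≤ G x} with hS
  have hself : ∀ x, x ∈ S x := by intro x; simp [hS]
  have htrans : ∀ x y, y ∈ S x → S y ⊆ S x := by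
    intro x y hy z hz
    simp only [hS, Set.mem_setOf_eq] at *
    have := dist_triangle z y x
    nlinarith [hz, hy, hε]
  have hbdd : ∀ x, BddBelow (G '' S x) := by
    intro x; exact ⟨c, by rintro r ⟨y, -, rfl⟩; exact hb y⟩
  have hne : ∀ x, (G '' S x).Nonempty := fun x => ⟨G x, x, hself x, rfl⟩
  have hnext : ∀ (x : Y) (n : ℕ), ∃ y, y ∈ S x ∧ G y ≤ sInf (G '' S x) + (n+1:ℝ)⁻¹ := by
    intro x n
    have hpos : (0:ℝ) < (n+1:ℝ)⁻¹ := by positivity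
    obtain ⟨r, ⟨y, hy, rfl⟩, hr⟩ := exists_lt_of_csInf_lt (hne x)
      (lt_add_of_pos_right _ hpos)
    exact ⟨y, hy, hr.le⟩
  let seq : ℕ → Y := fun n => Nat.rec x₀ (fun n x => Classical.choose (hnext x n)) n
  have hseqS : ∀ n, seq (n+1) ∈ S (seq n) := fun n =>
    (Classical.choose_spec (hnext (seq n) n)).1
  have hseqI : ∀ n, G (seq (n+1)) ≤ sInf (G '' S (seq n)) + (n+1:ℝ)⁻¹ := fun n =>
    (Classical.choose_spec (hnext (seq n) n)).2
  have hSmono : ∀ m n, m ≤ n → S (seq n) ⊆ S (seq m) := by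
    intro m n h
    induction n, h using Nat.le_induction with
    | base => exact fun z hz => hz
    | succ n hmn ih => exact fun z hz => ih (htrans _ _ (hseqS n) hz)
  have hmemS : ∀ m n, m ≤ n → seq n ∈ S (seq m) := fun m n h => hSmono m n h (hself _)
  have hGanti : ∀ m n, m ≤ n → G (seq n) ≤ G (seq m) := by
    intro m n h
    have := hmemS m n h
    simp only [hS, Set.mem_setOf_eq] at this
    nlinarith [dist_nonneg (x := seq n) (y := seq m), hε]
  set L : ℝ := ⨅ n, G (seq n) with hL
  have hbddL : BddBelow (Set.range fun n => G (seq n)) := ⟨c, by rintro r ⟨n, rfl⟩; exact hb _⟩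
  have hLle : ∀ n, L ≤ G (seq n) := fun n => ciInf_le hbddL n
  have hGtend : Tendsto (fun n => G (seq n)) atTop (𝓝 L) :=
    tendsto_atTop_ciInf (fun m n h => hGanti m n h) hbddL
  have hdist : ∀ m n, m ≤ n → ε * dist (seq n) (seq m) ≤ G (seq m) - G (seq n) := by
    intro m n h
    have := hmemS m n h
    simp only [hS, Set.mem_setOf_eq] at this
    linarith
  have hCauchy : CauchySeq seq := by
    apply cauchySeq_of_le_tendsto_0 (fun N => (G (seq N) - L) / ε)
    · intro n m N hn hm
      rcases le_total n m with h | h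
      · have h1 := hdist n m h
        have h2 := hGanti N n hn
        have h3 := hLle m
        rw [dist_comm, le_div_iff₀ hε]
        nlinarith
      · have h1 := hdist m n h
        have h2 := hGanti N m hm
        have h3 := hLle n
        rw [le_div_iff₀ hε]
        nlinarith
    · have : Tendsto (fun N => (G (seq N) - L) / ε) atTop (𝓝 ((L - L)/ε)) :=
        ((hGtend.sub tendsto_const_nhds).div_const ε)
      simpa using this
  obtain ⟨u, hu⟩ := cauchySeq_tendsto_of_complete hCauchy
  have hGu : G u ≤ L := by
    by_contra hlt
    push_neg at hlt
    obtain ⟨y, hy1, hy2⟩ := exists_between hlt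
    have hev1 : ∀ᶠ n in atTop, y < G (seq n) := hu.eventually (hG u y hy2)
    have hev2 : ∀ᶠ n in atTop, G (seq n) < y := hGtend.eventually_lt_const hy1
    obtain ⟨n, h1, h2⟩ := (hev1.and hev2).exists
    linarith
  refine ⟨u, hGu.trans (hLle 0), ?_⟩
  intro w
  by_cases hw : ∀ n, w ∈ S (seq n)
  · -- w in all S: then w = u
    have hGwL : L ≤ G w := by
      have key : ∀ n, G (seq (n+1)) - (n+1:ℝ)⁻¹ ≤ G w := by
        intro n
        have h1 : sInf (G '' S (seq n)) ≤ G w := csInf_le (hbdd _) ⟨w, hw n, rfl⟩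
        linarith [hseqI n]
      have htend : Tendsto (fun n : ℕ => G (seq (n+1)) - (n+1:ℝ)⁻¹) atTop (𝓝 (L - 0)) := by
        exact ((hGtend.comp (tendsto_add_atTop_nat 1)).sub (by simpa [one_div] using tendsto_one_div_add_atTop_nhds_zero_nat (𝕜 := ℝ) : Tendsto (fun n : ℕ => (n+1:ℝ)⁻¹) atTop (𝓝 0)))
      simpa using le_of_tendsto htend (Eventually.of_forall key)
    have hdw : Tendsto (fun n => ε * dist w (seq n)) atTop (𝓝 (ε * dist w u)) :=
      (tendsto_const_nhds.mul ((continuous_dist.comp (continuous_const.prodMk continuous_id)).continuousAt.tendsto.comp hu))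
    have hdw' : ∀ n, ε * dist w (seq n) ≤ G (seq n) - G w := by
      intro n
      have := hw n
      simp only [hS, Set.mem_setOf_eq] at this
      linarith
    have hlim : ε * dist w u ≤ L - G w := by
      refine le_of_tendsto_of_tendsto' hdw (hGtend.sub tendsto_const_nhds) hdw'
    have : dist w u = 0 := by
      have h0 : ε * dist w u ≤ 0 := by linarith
      have := dist_nonneg (x := w) (y := u)
      nlinarith
    have hwu : w = u := by rwa [dist_eq_zero] at this
    subst hwu
    simp [dist_self]
  · push_neg at hw
    obtain ⟨N, hN⟩ := hw
    have hnot : ∀ n, N ≤ n → G (seq n) < G w + ε * dist w (seq n) := by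
      intro n hn
      have : w ∉ S (seq n) := fun h => hN (hSmono N n hn h)
      simp only [hS, Set.mem_setOf_eq, not_le] at this
      linarith
    have htendr : Tendsto (fun n => G w + ε * dist w (seq n)) atTop (𝓝 (G w + ε * dist w u)) :=
      tendsto_const_nhds.add (tendsto_const_nhds.mul
        ((continuous_dist.comp (continuous_const.prodMk continuous_id)).continuousAt.tendsto.comp hu))
    have : L ≤ G w + ε * dist w u := by
      have hev : ∀ᶠ n in atTop, G (seq n) ≤ G w + ε * dist w (seq n) :=
        eventually_atTop.2 ⟨N, fun n hn => (hnot n hn).le⟩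
      exact le_of_tendsto_of_tendsto hGtend htendr hev
    linarith [hGu]



lemma epiR_closed (f : X → EReal) (hlsc : LowerSemicontinuous f) :
    IsClosed {p : X × ℝ | f p.1 ≤ ((p.2 : ℝ) : EReal)} := by
  have h1 : IsClosed {p : X × EReal | f p.1 ≤ p.2} := hlsc.isClosed_epigraph
  have h2 : Continuous (fun p : X × ℝ => ((p.1, (p.2 : EReal)) : X × EReal)) :=
    continuous_fst.prodMk (continuous_coe_real_ereal.comp continuous_snd)
  exact h1.preimage h2

lemma epiR_convex (f : X → EReal) (hconv : ERealConvexOn Set.univ f) :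
    Convex ℝ {p : X × ℝ | f p.1 ≤ ((p.2 : ℝ) : EReal)} := by
  rintro ⟨x, s⟩ hx ⟨y, t⟩ hy a b ha hb hab
  simp only [Set.mem_setOf_eq] at *
  have hb' : b = 1 - a := by linarith
  subst hb'
  have h := hconv x (mem_univ x) y (mem_univ y) a ha (by linarith)
  have h1 : (a : EReal) * f x ≤ (a : EReal) * (s : EReal) :=
    mul_le_mul_of_nonneg_left hx (by exact_mod_cast ha)
  have h2 : ((1 - a : ℝ) : EReal) * f y ≤ ((1 - a : ℝ) : EReal) * (t : EReal) :=
    mul_le_mul_of_nonneg_left hy (by exact_mod_cast hb)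
  calc f ((a • x + (1 - a) • y : X)) ≤ (a : EReal) * f x + ((1 - a : ℝ) : EReal) * f y := h
    _ ≤ (a : EReal) * (s : EReal) + ((1 - a : ℝ) : EReal) * (t : EReal) :=
        add_le_add h1 h2
    _ = ((a * s + (1 - a) * t : ℝ) : EReal) := by
        rw [← EReal.coe_mul, ← EReal.coe_mul, ← EReal.coe_add]

lemma clm_decomp (φ : (X × ℝ) →L[ℝ] ℝ) (x : X) (t : ℝ) :
    φ (x, t) = φ (x, 0) + t * φ (0, 1) := by
  have : ((x, t) : X × ℝ) = (x, 0) + t • ((0 : X), (1 : ℝ)) := by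
    simp [Prod.ext_iff]
  rw [this, map_add, map_smul]
  simp [smul_eq_mul]

lemma exists_affine_minorant (f : X → EReal) (hlsc : LowerSemicontinuous f)
    (hconv : ERealConvexOn Set.univ f) (hnb : ∀ x, f x ≠ ⊥)
    (z₀ : X) (hz : f z₀ ≠ ⊤) :
    ∃ (a : X →L[ℝ] ℝ) (b : ℝ), ∀ x, ((a x + b : ℝ) : EReal) ≤ f x := by
  set B : Set (X × ℝ) := {p | f p.1 ≤ ((p.2 : ℝ) : EReal)} with hB
  have hBc : IsClosed B := epiR_closed f hlsc
  have hBconv : Convex ℝ B := epiR_convex f hconv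
  set T : ℝ := (f z₀).toReal with hT
  have hfz : f z₀ = (T : EReal) := (EReal.coe_toReal hz (hnb z₀)).symm
  have hp : ((z₀, T - 1) : X × ℝ) ∉ B := by
    simp only [hB, Set.mem_setOf_eq, hfz]
    rw [EReal.coe_le_coe_iff]
    push_neg
    linarith
  obtain ⟨φ, u, hφ1, hφ2⟩ := geometric_hahn_banach_point_closed hBconv hBc hp
  set r : ℝ := φ (0, 1) with hr
  have hrpos : 0 < r := by
    have h1 : u < φ (z₀, T) := hφ2 _ (by simp [hB, hfz])
    have h2 : φ (z₀, T - 1) < u := hφ1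
    rw [clm_decomp] at h1 h2
    nlinarith
  refine ⟨-(1/r) • (φ.comp (ContinuousLinearMap.inl ℝ X ℝ)), u / r, ?_⟩
  intro x
  rcases eq_or_ne (f x) ⊤ with h | h
  · simp [h]
  · have hx : f x = ((f x).toReal : EReal) := (EReal.coe_toReal h (hnb x)).symm
    have hmem : ((x, (f x).toReal) : X × ℝ) ∈ B := by simp [hB, ← hx]
    have := hφ2 _ hmem
    rw [clm_decomp] at this
    rw [hx, EReal.coe_le_coe_iff]
    simp only [ContinuousLinearMap.coe_smul', Pi.smul_apply, ContinuousLinearMap.coe_comp',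
      Function.comp_apply, ContinuousLinearMap.inl_apply, smul_eq_mul]
    have h2 : u - φ (x, 0) < (f x).toReal * r := by linarith
    calc -(1/r) * φ (x, 0) + u / r = (u - φ (x, 0)) / r := by ring
      _ ≤ (f x).toReal := by rw [div_le_iff₀ hrpos]; linarith

lemma sandwich (f : X → EReal) (hconv : ERealConvexOn Set.univ f) (hnb : ∀ x, f x ≠ ⊥)
    (H : X → ℝ) (Hconv : ConvexOn ℝ Set.univ H) (Hcont : Continuous H)
    (u : X) (fu : ℝ) (hfu : f u = (fu : EReal))
    (hmin : ∀ x, ((fu + H u - H x : ℝ) : EReal) ≤ f x) :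
    ∃ v : X →L[ℝ] ℝ,
      (∀ x, ((fu + v (x - u) : ℝ) : EReal) ≤ f x) ∧ (∀ x, H u - v (x - u) ≤ H x) := by
  classical
  set q : X → ℝ := fun x => fu + H u - H x with hq
  have hqconc : ConcaveOn ℝ Set.univ q := by
    have h2 := Hconv.neg.add_const (fu + H u)
    have h3 : q = (fun x => -H x) + (fun _ => fu + H u) := by
      funext x; simp only [hq, Pi.add_apply]; ring
    rwa [h3]
  set A : Set (X × ℝ) := {p | p.2 < q p.1} with hA
  set B : Set (X × ℝ) := {p | f p.1 ≤ ((p.2 : ℝ) : EReal)} with hB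
  have hAopen : IsOpen A := by
    have : Continuous (fun p : X × ℝ => q p.1 - p.2) :=
      ((continuous_const.sub (Hcont.comp continuous_fst))).sub continuous_snd
    have h2 : A = (fun p : X × ℝ => q p.1 - p.2) ⁻¹' (Set.Ioi 0) := by
      ext p; simp [hA, hq, sub_pos]
    rw [h2]
    exact isOpen_Ioi.preimage this
  have hAconv : Convex ℝ A := by
    rintro ⟨x, s⟩ hx ⟨y, t⟩ hy a b ha hb hab
    simp only [hA, Set.mem_setOf_eq] at *
    rcases ha.lt_or_eq with ha' | ha'
    · have h1 : a * s < a * q x := by exact (mul_lt_mul_iff_right₀ ha').2 hx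
      have h2 : b * t ≤ b * q y := mul_le_mul_of_nonneg_left hy.le hb
      have h3 : a * q x + b * q y ≤ q (a • x + b • y) := by
        have := hqconc.2 (Set.mem_univ x) (Set.mem_univ y) ha hb hab
        simpa [smul_eq_mul] using this
      calc (a • (⟨x, s⟩ : X × ℝ) + b • ⟨y, t⟩).2 = a * s + b * t := by simp [smul_eq_mul]
        _ < a * q x + b * q y := by linarith
        _ ≤ q (a • x + b • y) := h3
        _ = q ((a • (⟨x, s⟩ : X × ℝ) + b • ⟨y, t⟩).1) := by simp
    · have hb1 : b = 1 := by linarith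
      subst hb1
      rw [← ha'] at *
      simpa using hy
  have hBconv : Convex ℝ B := epiR_convex f hconv
  have hdisj : Disjoint A B := by
    rw [Set.disjoint_left]
    rintro ⟨x, t⟩ hxA hxB
    simp only [hA, hB, Set.mem_setOf_eq] at hxA hxB
    have := (hmin x).trans hxB
    rw [EReal.coe_le_coe_iff] at this
    simp only [hq] at hxA
    linarith
  obtain ⟨φ, s0, hφ1, hφ2⟩ := geometric_hahn_banach_open hAconv hAopen hBconv hdisj
  set r : ℝ := φ (0, 1) with hr
  have key : ∀ x t, t < q x → φ (x, 0) + t * r < s0 := by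
    intro x t ht
    have := hφ1 ⟨x, t⟩ ht
    rwa [clm_decomp] at this
  have hr0 : 0 ≤ r := by
    by_contra hneg
    push_neg at hneg
    set t : ℝ := min (q u - 1) ((s0 - φ (u, 0)) / r - 1) with htdef
    have ht : t < q u := lt_of_le_of_lt (min_le_left _ _) (by linarith)
    have h1 := key u t ht
    have h2 : t ≤ (s0 - φ (u, 0)) / r - 1 := min_le_right _ _
    have h3 : ((s0 - φ (u, 0)) / r - 1) * r ≤ t * r := mul_le_mul_of_nonpos_right h2 hneg.le
    have h4 : ((s0 - φ (u, 0)) / r - 1) * r = (s0 - φ (u, 0)) - r := by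
      rw [sub_mul, div_mul_cancel₀ _ hneg.ne, one_mul]
    linarith
  have hrne : r ≠ 0 := by
    intro h0
    have h1 := key u (q u - 1) (by linarith)
    rw [h0, mul_zero, add_zero] at h1
    have h2 : ((u, fu) : X × ℝ) ∈ B := by simp [hB, hfu]
    have h3 := hφ2 _ h2
    rw [clm_decomp, ← hr, h0, mul_zero, add_zero] at h3
    linarith
  have hrpos : 0 < r := lt_of_le_of_ne hr0 (Ne.symm hrne)
  set v : X →L[ℝ] ℝ := -(1/r) • (φ.comp (ContinuousLinearMap.inl ℝ X ℝ)) with hv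
  have hvx : ∀ x, v x = -(1/r) * φ (x, 0) := by
    intro x
    simp [hv, ContinuousLinearMap.coe_smul', Pi.smul_apply, smul_eq_mul]
  set b0 : ℝ := s0 / r with hb0
  have hBside : ∀ x, ((b0 + v x : ℝ) : EReal) ≤ f x := by
    intro x
    rcases eq_or_ne (f x) ⊤ with h | h
    · simp [h]
    · have hx : f x = ((f x).toReal : EReal) := (EReal.coe_toReal h (hnb x)).symm
      have hmem : ((x, (f x).toReal) : X × ℝ) ∈ B := by simp [hB, ← hx]
      have h1 := hφ2 _ hmem
      rw [clm_decomp, ← hr] at h1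
      rw [hx, EReal.coe_le_coe_iff, hvx]
      have h2 : s0 - φ (x, 0) ≤ (f x).toReal * r := by linarith
      calc b0 + -(1/r) * φ (x, 0) = (s0 - φ (x, 0)) / r := by rw [hb0]; ring
        _ ≤ (f x).toReal := by rw [div_le_iff₀ hrpos]; linarith
  have hAside : ∀ x, q x ≤ b0 + v x := by
    intro x
    by_contra hlt
    push_neg at hlt
    have h1 := key x (b0 + v x) hlt
    rw [hvx x] at h1
    have h5 : (b0 + -(1/r) * φ (x, 0)) * r = s0 - φ (x, 0) := by
      rw [hb0]; field_simp; ring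
    linarith
  have hbu : b0 + v u = fu := by
    have h1 : fu ≤ b0 + v u := by
      have := hAside u
      simp only [hq] at this
      linarith
    have h2 : b0 + v u ≤ fu := by
      have := hBside u
      rw [hfu, EReal.coe_le_coe_iff] at this
      exact this
    linarith
  refine ⟨v, ?_, ?_⟩
  · intro x
    have := hBside x
    have heq : fu + v (x - u) = b0 + v x := by
      rw [map_sub]; linarith [hbu]
    rwa [heq]
  · intro x
    have := hAside x
    simp only [hq] at this
    rw [map_sub]
    linarith [hbu]


lemma lsc_add_cont (f : X → EReal) (hlsc : LowerSemicontinuous f) (hnb : ∀ x, f x ≠ ⊥)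
    (c : X → ℝ) (hc : Continuous c) :
    LowerSemicontinuous (fun x => f x + ((c x : ℝ) : EReal)) := by
  intro x y hy
  rcases eq_or_ne y ⊥ with hyb | hyb
  · subst hyb
    refine Eventually.of_forall fun x' => ?_
    refine bot_lt_iff_ne_bot.2 ?_
    show f x' + ((c x' : ℝ) : EReal) ≠ ⊥
    intro h
    rcases EReal.add_eq_bot_iff.mp h with h1 | h1
    · exact hnb x' h1
    · exact EReal.coe_ne_bot _ h1
  · have hyt : y ≠ ⊤ := hy.ne_top
    set yR : ℝ := y.toReal with hyR
    have hyc : y = (yR : EReal) := (EReal.coe_toReal hyt hyb).symm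
    have hlt : y - ((c x : ℝ) : EReal) < f x := EReal.sub_lt_of_lt_add hy
    obtain ⟨r, hr1, hr2⟩ := EReal.exists_between_coe_real hlt
    have hyr : yR < r + c x := by
      rw [hyc, ← EReal.coe_sub, EReal.coe_lt_coe_iff] at hr1
      linarith
    have hev1 := hlsc x r hr2
    have hev2 : ∀ᶠ x' in 𝓝 x, yR - r < c x' :=
      (hc.tendsto x).eventually (eventually_gt_nhds (by linarith))
    filter_upwards [hev1, hev2] with x' h1 h2
    calc y = ((yR : ℝ) : EReal) := hyc
      _ < ((r + c x' : ℝ) : EReal) := by rw [EReal.coe_lt_coe_iff]; linarith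
      _ = (r : EReal) + ((c x' : ℝ) : EReal) := EReal.coe_add _ _
      _ ≤ f x' + ((c x' : ℝ) : EReal) := add_le_add h1.le le_rfl

lemma normsub_convexOn (z : X) : ConvexOn ℝ Set.univ (fun x => ‖x - z‖) := by
  constructor
  · exact convex_univ
  · intro x _ y _ a b ha hb hab
    have hz : a • z + b • z = z := by rw [← add_smul, hab, one_smul]
    have heq : a • x + b • y - z = a • (x - z) + b • (y - z) := by
      have h2 : a • (x - z) + b • (y - z) = a • x + b • y - (a • z + b • z) := by
        rw [smul_sub, smul_sub]; abel
      rw [h2, hz]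
    simp only [smul_eq_mul]
    rw [heq]
    calc ‖a • (x - z) + b • (y - z)‖ ≤ ‖a • (x - z)‖ + ‖b • (y - z)‖ := norm_add_le _ _
      _ = a * ‖x - z‖ + b * ‖y - z‖ := by
          rw [norm_smul, norm_smul, Real.norm_eq_abs, Real.norm_eq_abs,
            abs_of_nonneg ha, abs_of_nonneg hb]

lemma clm_affine_convexOn (l : X →L[ℝ] ℝ) (c : ℝ) :
    ConvexOn ℝ Set.univ (fun x => l x + c) := by
  constructor
  · exact convex_univ
  · intro x _ y _ a b ha hb hab
    simp only [map_add, map_smul, smul_eq_mul]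
    have h1 : a * c + b * c = c := by rw [← add_mul, hab, one_mul]
    nlinarith [h1]

set_option maxHeartbeats 2000000 in
lemma core_subdiff [CompleteSpace X] (f : X → EReal) (hlsc : LowerSemicontinuous f)
    (hconv : ERealConvexOn Set.univ f) (hnb : ∀ x, f x ≠ ⊥)
    (xh : X) (sh : X →L[ℝ] ℝ)
    (hrel : ∀ (u : X) (v : X →L[ℝ] ℝ),
      (∀ y, f u + ((v (y - u) : ℝ) : EReal) ≤ f y) → 0 ≤ (v - sh) (u - xh)) :
    ∀ y, f xh + ((sh (y - xh) : ℝ) : EReal) ≤ f y := by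
  intro y
  rcases eq_or_ne (f y) ⊤ with hyt | hyt
  · rw [hyt]; exact le_top
  set fyR : ℝ := (f y).toReal with hfyR
  have hfy : f y = (fyR : EReal) := (EReal.coe_toReal hyt (hnb y)).symm
  obtain ⟨a, b, hab⟩ := exists_affine_minorant f hlsc hconv hnb y hyt
  set R : ℝ := ‖y - xh‖ with hR
  have hR0 : 0 ≤ R := norm_nonneg _
  have claim : ∀ k : ℝ, 0 < k →
      ∃ fxR : ℝ, f xh = (fxR : EReal) ∧ fxR + sh (y - xh) ≤ fyR + k * R := by
    intro k hk
    set K : ℝ := ‖a‖ + ‖sh‖ with hK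
    have hK0 : 0 ≤ K := add_nonneg (norm_nonneg _) (norm_nonneg _)
    set h : X → ℝ := fun x => k * ‖x - xh‖ + K * max (‖x - xh‖ - R) 0 with hh
    set cc : X → ℝ := fun x => h x - sh (x - xh) with hcc
    set g : X → EReal := fun x => f x + ((cc x : ℝ) : EReal) with hg
    have hccxh : cc xh = 0 := by
      simp only [hcc, hh, sub_self, norm_zero, map_zero, mul_zero, zero_add, zero_sub,
        sub_zero]
      rw [max_eq_right (by linarith : -R ≤ (0:ℝ)), mul_zero]
    have hccont : Continuous cc := by
      apply Continuous.sub
      · apply Continuous.add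
        · exact continuous_const.mul ((continuous_id.sub continuous_const).norm)
        · exact continuous_const.mul
            (((continuous_id.sub continuous_const).norm.sub continuous_const).max
              continuous_const)
      · exact sh.continuous.comp (continuous_id.sub continuous_const)
    have hgnb : ∀ x, g x ≠ ⊥ := by
      intro x h0
      rcases EReal.add_eq_bot_iff.mp h0 with h1 | h1
      · exact hnb x h1
      · exact EReal.coe_ne_bot _ h1
    have hglsc : LowerSemicontinuous g := lsc_add_cont f hlsc hnb cc hccont
    set c0 : ℝ := a xh + b - K * R with hc0
    have hgb : ∀ x, ((c0 : ℝ) : EReal) ≤ g x := by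
      intro x
      have h2 : ((a x + b + cc x : ℝ) : EReal) ≤ g x := by
        rw [EReal.coe_add]; exact add_le_add (hab x) le_rfl
      refine le_trans ?_ h2
      rw [EReal.coe_le_coe_iff]
      have hax : a x = a xh + a (x - xh) := by rw [map_sub]; ring
      have ha1 : -(‖a‖ * ‖x - xh‖) ≤ a (x - xh) ∧ a (x - xh) ≤ ‖a‖ * ‖x - xh‖ := by
        have := a.le_opNorm (x - xh)
        rw [Real.norm_eq_abs] at this
        exact abs_le.mp this
      have hs1 : -(‖sh‖ * ‖x - xh‖) ≤ sh (x - xh) ∧ sh (x - xh) ≤ ‖sh‖ * ‖x - xh‖ := by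
        have := sh.le_opNorm (x - xh)
        rw [Real.norm_eq_abs] at this
        exact abs_le.mp this
      have hmax0 : 0 ≤ max (‖x - xh‖ - R) 0 := le_max_right _ _
      have hmax1 : ‖x - xh‖ - R ≤ max (‖x - xh‖ - R) 0 := le_max_left _ _
      have ht0 : 0 ≤ ‖x - xh‖ := norm_nonneg _
      simp only [hcc, hh, hc0, hK]
      rcases le_total ‖x - xh‖ R with hcase | hcase
      · nlinarith [ha1.1, hs1.2, mul_nonneg hK0 hmax0, mul_nonneg hk.le ht0]
      · nlinarith [ha1.1, hs1.2, mul_le_mul_of_nonneg_left hmax1 hK0,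
          mul_nonneg hk.le ht0]
    -- value of g at y
    have hccy : cc y = k * R - sh (y - xh) := by
      simp only [hcc, hh, ← hR, sub_self]
      simp
    have hgy : g y = ((fyR + cc y : ℝ) : EReal) := by
      show f y + _ = _
      rw [hfy, ← EReal.coe_add]
    set C : ℝ := fyR + cc y + 1 with hC
    set c1 : ℝ := min c0 C with hc1
    set G : X → ℝ := fun x => ((g x) ⊓ ((C : ℝ) : EReal)).toReal with hG
    have hgfinb : ∀ x, g x ⊓ ((C:ℝ):EReal) ≠ ⊥ := by
      intro x
      refine ne_of_gt (lt_inf_iff.2 ⟨?_, ?_⟩)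
      · exact bot_lt_iff_ne_bot.2 (hgnb x)
      · exact bot_lt_iff_ne_bot.2 (EReal.coe_ne_bot _)
    have hgfint : ∀ x, g x ⊓ ((C:ℝ):EReal) ≠ ⊤ :=
      fun x => ne_top_of_le_ne_top (EReal.coe_ne_top C) inf_le_right
    have hGle : ∀ x, ((G x : ℝ) : EReal) ≤ g x := by
      intro x
      calc ((G x : ℝ) : EReal) = g x ⊓ ((C:ℝ):EReal) :=
            EReal.coe_toReal (hgfint x) (hgfinb x)
        _ ≤ g x := inf_le_left
    have hGC : ∀ x, G x ≤ C := by
      intro x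
      have := EReal.toReal_le_toReal (inf_le_right : g x ⊓ ((C:ℝ):EReal) ≤ _)
        (hgfinb x) (EReal.coe_ne_top C)
      simpa using this
    have hGlb : ∀ x, c1 ≤ G x := by
      intro x
      have h1 : ((c1:ℝ):EReal) ≤ g x ⊓ ((C:ℝ):EReal) :=
        le_inf ((EReal.coe_le_coe_iff.2 (min_le_left _ _)).trans (hgb x))
          (EReal.coe_le_coe_iff.2 (min_le_right _ _))
      have := EReal.toReal_le_toReal h1 (EReal.coe_ne_bot c1) (hgfint x)
      simpa using this
    have hGlsc : LowerSemicontinuous G := by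
      intro x yv hyv
      have hyvC : yv < C := lt_of_lt_of_le hyv (hGC x)
      have h1 : ((yv:ℝ):EReal) < g x := by
        have h2 : ((yv:ℝ):EReal) < g x ⊓ ((C:ℝ):EReal) := by
          rw [← EReal.coe_toReal (hgfint x) (hgfinb x)]
          exact_mod_cast hyv
        exact h2.trans_le inf_le_left
      filter_upwards [hglsc x _ h1] with x' hx'
      have h3 : ((yv:ℝ):EReal) < g x' ⊓ ((C:ℝ):EReal) :=
        lt_inf_iff.2 ⟨hx', EReal.coe_lt_coe_iff.2 hyvC⟩
      rw [← EReal.coe_toReal (hgfint x') (hgfinb x')] at h3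
      exact_mod_cast h3
    obtain ⟨u, hu1, hu2⟩ := ekelandWeak G hGlsc c1 hGlb
      (by positivity : (0:ℝ) < k/2) y
    have hGy : G y = fyR + cc y := by
      have h1 : g y ⊓ ((C:ℝ):EReal) = ((fyR + cc y : ℝ):EReal) := by
        rw [hgy]
        exact inf_eq_left.mpr (EReal.coe_le_coe_iff.2 (by rw [hC]; linarith))
      show ((g y) ⊓ ((C:ℝ):EReal)).toReal = _
      rw [h1, EReal.toReal_coe]
    have hGuC : G u < C := by
      rw [hGy] at hu1
      rw [hC]
      linarith
    have hgu : g u = ((G u : ℝ):EReal) := by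
      rcases le_total (g u) ((C:ℝ):EReal) with hle | hge
      · have h1 : g u ⊓ ((C:ℝ):EReal) = g u := inf_eq_left.mpr hle
        rw [show ((G u : ℝ):EReal) = g u ⊓ ((C:ℝ):EReal) from
          EReal.coe_toReal (hgfint u) (hgfinb u), h1]
      · exfalso
        have h1 : g u ⊓ ((C:ℝ):EReal) = ((C:ℝ):EReal) := inf_eq_right.mpr hge
        have h2 : G u = C := by
          show ((g u) ⊓ ((C:ℝ):EReal)).toReal = C
          rw [h1, EReal.toReal_coe]
        linarith
    set fuR : ℝ := G u - cc u with hfuR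
    have hfu : f u = ((fuR : ℝ) : EReal) := by
      have h1 : f u + ((cc u : ℝ):EReal) = ((G u:ℝ):EReal) := hgu
      have h2 : f u = ((G u:ℝ):EReal) - ((cc u:ℝ):EReal) := by
        rw [← h1, EReal.add_sub_cancel_right]
      rw [h2, ← EReal.coe_sub]
    set H : X → ℝ := fun x => cc x + (k/2) * ‖x - u‖ with hH
    have hHu : H u = cc u := by
      simp only [hH, sub_self, norm_zero, mul_zero, add_zero]
    have hHconv : ConvexOn ℝ Set.univ H := by
      apply ConvexOn.add
      · have hA : ConvexOn ℝ Set.univ fun x => k * ‖x - xh‖ := by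
          simpa [smul_eq_mul] using (normsub_convexOn (X:=X) xh).smul hk.le
        have hBc : ConvexOn ℝ Set.univ fun x => max (‖x - xh‖ - R) 0 := by
          have h1 := (normsub_convexOn (X:=X) xh).add_const (-R)
          have h2 := h1.sup (convexOn_const (0:ℝ) convex_univ)
          exact h2
        have hB2 : ConvexOn ℝ Set.univ fun x => K * max (‖x - xh‖ - R) 0 := by
          simpa [smul_eq_mul] using hBc.smul hK0
        have hC2 : ConvexOn ℝ Set.univ fun x => (-sh) x + sh xh :=
          clm_affine_convexOn (-sh) (sh xh)
        have hsum := (hA.add hB2).add hC2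
        have heq : cc = (((fun x => k * ‖x - xh‖) + fun x => K * max (‖x - xh‖ - R) 0) +
            fun x => (-sh) x + sh xh) := by
          funext x
          simp only [hcc, hh, Pi.add_apply, ContinuousLinearMap.neg_apply, map_sub]
          ring
        rw [heq]
        exact hsum
      · simpa [smul_eq_mul] using
          (normsub_convexOn (X:=X) u).smul (by positivity : (0:ℝ) ≤ k/2)
    have hHcont : Continuous H :=
      hccont.add (continuous_const.mul ((continuous_id.sub continuous_const).norm))
    have hmin2 : ∀ x, ((fuR + H u - H x : ℝ) : EReal) ≤ f x := by
      intro x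
      have h1 := hu2 x
      rw [dist_eq_norm] at h1
      have h2 : ((G u - (k/2) * ‖x - u‖ : ℝ) : EReal) ≤ g x :=
        le_trans (EReal.coe_le_coe_iff.2 h1) (hGle x)
      have h3 : ((G u - (k/2) * ‖x - u‖ - cc x : ℝ) : EReal) ≤ f x := by
        have h4 : ((G u - (k/2) * ‖x - u‖ : ℝ) : EReal) ≤ f x + ((cc x:ℝ):EReal) := h2
        have h5 := EReal.sub_le_of_le_add h4
        rwa [← EReal.coe_sub] at h5
      refine le_trans (EReal.coe_le_coe_iff.2 (le_of_eq ?_)) h3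
      rw [hHu, hfuR]
      simp only [hH]
      ring
    obtain ⟨v, hv1, hv2⟩ := sandwich f hconv hnb H hHconv hHcont u fuR hfu hmin2
    have hvsub : ∀ y', f u + ((v (y' - u) : ℝ) : EReal) ≤ f y' := by
      intro y'
      rw [hfu, ← EReal.coe_add]
      exact hv1 y'
    have hpair := hrel u v hvsub
    have hxh := hv2 xh
    have hHxh : H xh = (k/2) * ‖xh - u‖ := by
      simp only [hH, hccxh, zero_add]
    have hhu : k * ‖u - xh‖ ≤ h u := by
      have h1 : 0 ≤ K * max (‖u - xh‖ - R) 0 := mul_nonneg hK0 (le_max_right _ _)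
      simp only [hh]
      linarith
    have huxh : u = xh := by
      have e1 : (v - sh) (u - xh) = v (u - xh) - sh (u - xh) := by
        simp [ContinuousLinearMap.sub_apply]
      have e2 : v (xh - u) = - v (u - xh) := by
        rw [← map_neg]; congr 1; abel
      have e3 : ‖xh - u‖ = ‖u - xh‖ := norm_sub_rev _ _
      rw [hHu, hHxh, e2, e3] at hxh
      have e4 : cc u = h u - sh (u - xh) := rfl
      rw [e4] at hxh
      rw [e1] at hpair
      have t1 : h u - sh (u - xh) + v (u - xh) ≤ k / 2 * ‖u - xh‖ := by linarith [hxh]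
      have t2 : h u ≤ k / 2 * ‖u - xh‖ := by linarith [t1, hpair]
      have e5 : k * ‖u - xh‖ ≤ (k/2) * ‖u - xh‖ := le_trans hhu t2
      have e6 : ‖u - xh‖ ≤ 0 := by nlinarith
      have e7 : ‖u - xh‖ = 0 := le_antisymm e6 (norm_nonneg _)
      have e8 : u - xh = 0 := norm_eq_zero.mp e7
      exact sub_eq_zero.mp e8
    refine ⟨fuR, ?_, ?_⟩
    · rw [← huxh]; exact hfu
    · have hccu : cc u = 0 := by rw [huxh]; exact hccxh
      have e1 : fuR = G u := by rw [hfuR, hccu]; ring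
      have h2 : G u ≤ fyR + cc y := by rw [← hGy]; exact hu1
      rw [e1, hccy] at *
      linarith
  -- conclude from the claim
  obtain ⟨fxR, hfx, h1⟩ := claim 1 one_pos
  have hfin : ∀ k : ℝ, 0 < k → fxR + sh (y - xh) ≤ fyR + k * R := by
    intro k hk
    obtain ⟨fxR', hfx', h2⟩ := claim k hk
    have : fxR = fxR' := by
      rw [hfx] at hfx'
      exact_mod_cast hfx'
    rw [this]; exact h2
  have hle : fxR + sh (y - xh) ≤ fyR := by
    by_contra hcon
    push_neg at hcon
    rcases eq_or_lt_of_le hR0 with hReq | hRpos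
    · have := hfin 1 one_pos
      rw [← hReq] at this
      linarith
    · set k0 : ℝ := (fxR + sh (y - xh) - fyR) / (2 * R) with hk0
      have hk0pos : 0 < k0 := by
        apply div_pos (by linarith) (by linarith)
      have := hfin k0 hk0pos
      have hkR : k0 * R = (fxR + sh (y - xh) - fyR) / 2 := by
        rw [hk0]; field_simp
      rw [hkR] at this
      linarith
  rw [hfx, hfy, ← EReal.coe_add, EReal.coe_le_coe_iff]
  exact hle

lemma subdiff_monotone_rel [CompleteSpace X] (f : X → EReal)
    (hlsc : LowerSemicontinuous f) (hconv : ERealConvexOn Set.univ f)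
    (hnb : ∀ x, f x ≠ ⊥) (z₀ : X) (hz : f z₀ ≠ ⊤) :
    MaximalMonotoneOperator (ConvexSubdiff f) := by
  have hfin : ∀ (u : X) (v : X →L[ℝ] ℝ), v ∈ ConvexSubdiff f u → f u ≠ ⊤ := by
    intro u v hv h
    have h1 := hv z₀
    rw [h, EReal.top_add_coe] at h1
    exact hz (top_le_iff.mp h1)
  constructor
  · intro x1 x2 v1 hv1 v2 hv2
    have h1 := hv1 x2
    have h2 := hv2 x1
    have ht1 : f x1 ≠ ⊤ := hfin _ _ hv1
    have ht2 : f x2 ≠ ⊤ := hfin _ _ hv2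
    have he1 : f x1 = (((f x1).toReal : ℝ) : EReal) := (EReal.coe_toReal ht1 (hnb x1)).symm
    have he2 : f x2 = (((f x2).toReal : ℝ) : EReal) := (EReal.coe_toReal ht2 (hnb x2)).symm
    rw [he1, he2, ← EReal.coe_add, EReal.coe_le_coe_iff] at h1 h2
    have e1 : v1 (x2 - x1) = v1 x2 - v1 x1 := map_sub _ _ _
    have e2 : v2 (x1 - x2) = v2 x1 - v2 x2 := map_sub _ _ _
    rw [e1] at h1
    rw [e2] at h2
    simp only [ContinuousLinearMap.sub_apply, map_sub]
    linarith
  · intro S hS hsub x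
    refine Set.Subset.antisymm ?_ (hsub x)
    intro s hs
    exact core_subdiff f hlsc hconv hnb x s
      (fun u v hv => hS u x v (hsub u hv) s hs)

lemma const_op_maximal (c : X →L[ℝ] ℝ) :
    MaximalMonotoneOperator (fun _ : X => ({c} : Set (X →L[ℝ] ℝ))) := by
  constructor
  · intro x1 x2 v1 hv1 v2 hv2
    rw [Set.mem_singleton_iff] at hv1 hv2
    subst hv1; subst hv2
    simp
  · intro S hS hsub x
    ext s
    simp only [Set.mem_singleton_iff]
    constructor
    · intro hs
      have key : ∀ w : X, 0 ≤ (s - c) w := by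
        intro w
        have h1 := hS x (x - w) s hs c (hsub (x - w) rfl)
        have h2 : x - (x - w) = w := by abel
        rwa [h2] at h1
      have key2 : ∀ w : X, (s - c) w = 0 := by
        intro w
        have h1 := key w
        have h2 := key (-w)
        rw [map_neg] at h2
        linarith
      have h3 : s - c = 0 := by
        ext w
        exact key2 w
      exact sub_eq_zero.mp h3
    · rintro rfl
      exact hsub x rfl

end Aux

/-- variational convexity implies `φ`-local maximal
monotonicity of the limiting subdifferential. -/
theorem variationallyConvex_implies_local_maximal_monotone
    [CompleteSpace X] (φ : X → EReal) (hlsc : LowerSemicontinuous φ)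
    (hnb : ∀ x, φ x ≠ ⊥) (xbar : X) (xsbar : X →L[ℝ] ℝ)
    (hsub : xsbar ∈ LimitingSubdiff φ xbar)
    (hvc : VariationallyConvexAt φ xbar xsbar) :
    ∃ (U : Set X) (V : Set (X →L[ℝ] ℝ)) (ε : ℝ)
      (Tbar : X → Set (X →L[ℝ] ℝ)),
      IsOpen U ∧ xbar ∈ U ∧ IsOpen V ∧ xsbar ∈ V ∧ 0 < ε ∧
      MaximalMonotoneOperator Tbar ∧
      ∀ (x : X) (xs : X →L[ℝ] ℝ),
        x ∈ U → φ x < φ xbar + (ε : EReal) → xs ∈ V →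
        (xs ∈ Tbar x ↔ xs ∈ LimitingSubdiff φ x) := by
  obtain ⟨U, V, hUo, hUc, hxU, hVo, hVc, hxsV, φhat, ε, hε, hconv, hlsc2, hle, hiff, heq⟩ := hvc
  by_cases hbot : ∃ z, φhat z = ⊥
  · -- Case 2 : φhat takes value ⊥
    obtain ⟨z, hz⟩ := hbot
    have hUnb : ∀ x ∈ U, φhat x ≠ ⊥ := by
      intro x hx hb
      have hmem : xsbar ∈ ConvexSubdiff φhat x := by
        intro y
        rw [hb, EReal.bot_add]
        exact bot_le
      have := heq x xsbar ⟨hx, hxsV, hmem⟩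
      rw [hb] at this
      exact hnb x this
    have hempty : ∀ x ∈ U, ConvexSubdiff φhat x = ∅ := by
      intro x hx
      ext v
      simp only [Set.mem_empty_iff_false, iff_false]
      intro hv
      have h1 := hv z
      rw [hz, le_bot_iff, EReal.add_eq_bot_iff] at h1
      rcases h1 with h1 | h1
      · exact hUnb x hx h1
      · exact EReal.coe_ne_bot _ h1
    have hnolim : ∀ x ∈ U, φ x < φ xbar + (ε : EReal) →
        ∀ v ∈ V, v ∉ LimitingSubdiff φ x := by
      intro x hx hφ v hvV hvlim
      have h1 := (hiff x v).mp ⟨hx, hφ, hvV, hvlim⟩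
      rw [hempty x hx] at h1
      exact h1.2.2
    have htop : φ xbar = ⊤ := by
      by_contra hne
      have hco : φ xbar = (((φ xbar).toReal : ℝ) : EReal) :=
        (EReal.coe_toReal hne (hnb xbar)).symm
      have hreal : φ xbar < φ xbar + (ε : EReal) := by
        rw [hco, ← EReal.coe_add, EReal.coe_lt_coe_iff]
        linarith
      exact hnolim xbar hxU hreal xsbar hxsV hsub
    have hXnt : Nontrivial X := by
      by_contra hnt
      rw [not_nontrivial_iff_subsingleton] at hnt
      have : z = xbar := Subsingleton.elim z xbar
      rw [this] at hz
      exact hUnb xbar hxU hz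
    obtain ⟨x0, hx0⟩ := exists_ne (0 : X)
    obtain ⟨e, he1, he2⟩ := exists_dual_vector ℝ x0 (norm_ne_zero_iff.mpr hx0)
    refine ⟨U, V ∩ Metric.ball xsbar 1, ε, fun _ => {xsbar + e}, hUo, hxU,
      hVo.inter Metric.isOpen_ball, ⟨hxsV, Metric.mem_ball_self one_pos⟩, hε,
      const_op_maximal _, ?_⟩
    intro x xs hx hφ hxs
    constructor
    · intro hmem
      exfalso
      rw [Set.mem_singleton_iff] at hmem
      have h1 : dist xs xsbar < 1 := hxs.2
      rw [hmem] at h1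
      rw [dist_eq_norm, add_sub_cancel_left] at h1
      rw [he1] at h1
      exact lt_irrefl _ h1
    · intro hmem
      exact absurd hmem (hnolim x hx hφ xs hxs.1)
  · push_neg at hbot
    by_cases hprop : ∃ z, φhat z ≠ ⊤
    · -- Case 1 : φhat proper
      obtain ⟨z, hz⟩ := hprop
      refine ⟨U, V, ε, ConvexSubdiff φhat, hUo, hxU, hVo, hxsV, hε,
        subdiff_monotone_rel φhat hlsc2 hconv hbot z hz, ?_⟩
      intro x xs hx hφ hxs
      constructor
      · intro hmem
        exact ((hiff x xs).mpr ⟨hx, hxs, hmem⟩).2.2.2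
      · intro hmem
        exact ((hiff x xs).mp ⟨hx, hφ, hxs, hmem⟩).2.2
    · -- Case 3 : φhat ≡ ⊤
      push_neg at hprop
      have hall : ∀ x ∈ U, φ x = ⊤ := by
        intro x hx
        have hmem : xsbar ∈ ConvexSubdiff φhat x := by
          intro y
          rw [hprop y]
          exact le_top
        have := heq x xsbar ⟨hx, hxsV, hmem⟩
        rw [hprop x] at this
        exact this
      refine ⟨U, V, ε, fun _ => {0}, hUo, hxU, hVo, hxsV, hε,
        const_op_maximal _, ?_⟩
      intro x xs hx hφ hxs
      exfalso
      rw [hall x hx, hall xbar hxU, EReal.top_add_coe] at hφ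
      exact lt_irrefl _ hφ
end
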